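/- Korányi-type estimate on the upper half-plane: for every δ > 0 there exists C_δ > 0 such that for all z, w, ζ in the upper half-plane with hyperbolic distance d(z,w) ≤ δ, one has |(ζ − conj(z))/(ζ − conj(w)) − 1| ≤ C_δ · d(z, w). -/

import Mathlib

open scoped UpperHalfPlane

/-- Korányi-type estimate on the upper half-plane: for every `δ > 0` there is `C_δ > 0` such
that for all `z, w, ζ` in the upper half-plane (with its hyperbolic metric) with
`d(z,w) ≤ δ`, one has `|(ζ - conj z)/(ζ - conj w) - 1| ≤ C_δ · d(z,w)`. -/
theorem koranyi_upperHalfPlane (δ : ℝ) (hδ : 0 < δ) :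
    ∃ C : ℝ, 0 < C ∧ ∀ z w ζ : ℍ, dist z w ≤ δ →
      ‖((ζ : ℂ) - (starRingEnd ℂ) (z : ℂ)) / ((ζ : ℂ) - (starRingEnd ℂ) (w : ℂ)) - 1‖ ≤
        C * dist z w := by
  refine ⟨Real.exp δ, Real.exp_pos δ, ?_⟩
  intro z w ζ hd
  set d := dist z w with hdd
  have hd0 : 0 ≤ d := dist_nonneg
  have hzim : 0 < z.im := z.im_pos
  have hwim : 0 < w.im := w.im_pos
  have hζim : 0 < ζ.im := ζ.im_pos
  -- denominator lower bound
  have himden : ((ζ : ℂ) - (starRingEnd ℂ) (w : ℂ)).im = ζ.im + w.im := by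
    simp [Complex.sub_im, Complex.conj_im, UpperHalfPlane.coe_im]
  have hden : w.im ≤ ‖(ζ : ℂ) - (starRingEnd ℂ) (w : ℂ)‖ := by
    have := Complex.abs_im_le_norm ((ζ : ℂ) - (starRingEnd ℂ) (w : ℂ))
    rw [himden] at this
    have : ζ.im + w.im ≤ ‖(ζ : ℂ) - (starRingEnd ℂ) (w : ℂ)‖ :=
      le_trans (le_abs_self _) this
    linarith
  have hdenpos : 0 < ‖(ζ : ℂ) - (starRingEnd ℂ) (w : ℂ)‖ := lt_of_lt_of_le hwim hden
  have hne : ((ζ : ℂ) - (starRingEnd ℂ) (w : ℂ)) ≠ 0 := by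
    intro h
    rw [h, norm_zero] at hdenpos
    exact lt_irrefl 0 hdenpos
  -- rewrite the expression
  have hrw : ((ζ : ℂ) - (starRingEnd ℂ) (z : ℂ)) / ((ζ : ℂ) - (starRingEnd ℂ) (w : ℂ)) - 1
      = ((starRingEnd ℂ) ((w : ℂ) - (z : ℂ))) / ((ζ : ℂ) - (starRingEnd ℂ) (w : ℂ)) := by
    field_simp
    rw [map_sub]; ring
  rw [hrw, norm_div, RCLike.norm_conj]
  -- numerator equals the euclidean distance
  have hnum : ‖(w : ℂ) - (z : ℂ)‖ = dist (z : ℂ) (w : ℂ) := by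
    rw [dist_eq_norm, norm_sub_rev]
  rw [hnum]
  -- key formula for euclidean distance via sinh of hyperbolic distance
  have hs : 0 < Real.sqrt (z.im * w.im) := Real.sqrt_pos.2 (mul_pos hzim hwim)
  have hkey : dist (z : ℂ) (w : ℂ) = 2 * Real.sqrt (z.im * w.im) * Real.sinh (d / 2) := by
    rw [hdd, UpperHalfPlane.sinh_half_dist]
    field_simp
  -- sinh bound : sinh t ≤ t * exp t for t ≥ 0
  have hsinh : Real.sinh (d / 2) ≤ (d / 2) * Real.exp (δ / 2) := by
    have ht : (0 : ℝ) ≤ d / 2 := by linarith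
    have h1 : 1 - d / 2 ≤ Real.exp (-(d / 2)) := by
      linarith [Real.add_one_le_exp (-(d / 2))]
    have h2 : Real.exp (-(d / 2)) * Real.exp (d / 2) = 1 := by
      rw [← Real.exp_add]; simp
    have h3 : (1 : ℝ) ≤ Real.exp (d / 2) := Real.one_le_exp ht
    have hstep : Real.sinh (d / 2) ≤ (d / 2) * Real.exp (d / 2) := by
      rw [Real.sinh_eq]
      nlinarith [Real.exp_pos (d / 2), Real.exp_pos (-(d / 2))]
    have hmono : Real.exp (d / 2) ≤ Real.exp (δ / 2) :=
      Real.exp_le_exp.2 (by linarith)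
    calc Real.sinh (d / 2) ≤ (d / 2) * Real.exp (d / 2) := hstep
      _ ≤ (d / 2) * Real.exp (δ / 2) := by
          exact mul_le_mul_of_nonneg_left hmono ht
  have hsinh0 : 0 ≤ Real.sinh (d / 2) := Real.sinh_zero ▸ Real.sinh_le_sinh.2 (by linarith : (0:ℝ) ≤ d / 2)
  -- imaginary part comparison
  have hlog : Real.log z.im - Real.log w.im ≤ δ := by
    have h := UpperHalfPlane.dist_log_im_le z w
    rw [Real.dist_eq] at h
    have := le_abs_self (Real.log z.im - Real.log w.im)
    linarith
  have hzw : z.im ≤ w.im * Real.exp δ := by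
    have he : Real.exp (Real.log z.im) ≤ Real.exp (Real.log w.im + δ) :=
      Real.exp_le_exp.2 (by linarith)
    rwa [Real.exp_log hzim, Real.exp_add, Real.exp_log hwim] at he
  have hsqrtexp : Real.sqrt (Real.exp δ) = Real.exp (δ / 2) := by
    have hh : Real.exp δ = Real.exp (δ / 2) * Real.exp (δ / 2) := by
      rw [← Real.exp_add]; ring_nf
    rw [hh, Real.sqrt_mul_self (Real.exp_pos _).le]
  have hsqrt : Real.sqrt (z.im * w.im) ≤ w.im * Real.exp (δ / 2) := by
    have h1 : Real.sqrt (z.im * w.im) ≤ Real.sqrt (w.im * Real.exp δ * w.im) :=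
      Real.sqrt_le_sqrt (by nlinarith)
    have h2 : Real.sqrt (w.im * Real.exp δ * w.im) = w.im * Real.exp (δ / 2) := by
      rw [show w.im * Real.exp δ * w.im = (w.im * w.im) * Real.exp δ by ring,
        Real.sqrt_mul (by positivity), Real.sqrt_mul_self hwim.le, hsqrtexp]
    linarith [h1, h2.le]
  -- combine: numerator ≤ w.im * exp δ * d
  have hexphalf : 0 < Real.exp (δ / 2) := Real.exp_pos _
  have hnumbd : dist (z : ℂ) (w : ℂ) ≤ w.im * Real.exp δ * d := by
    rw [hkey]
    have hexpδ : Real.exp (δ / 2) * Real.exp (δ / 2) = Real.exp δ := by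
      rw [← Real.exp_add]; ring_nf
    have hmm := mul_le_mul hsqrt hsinh hsinh0 (by positivity :
      (0:ℝ) ≤ w.im * Real.exp (δ / 2))
    calc 2 * Real.sqrt (z.im * w.im) * Real.sinh (d / 2)
        ≤ 2 * ((w.im * Real.exp (δ / 2)) * (d / 2 * Real.exp (δ / 2))) := by linarith
      _ = w.im * (Real.exp (δ / 2) * Real.exp (δ / 2)) * d := by ring
      _ = w.im * Real.exp δ * d := by rw [hexpδ]
  -- final division estimate
  have hdiv : dist (z : ℂ) (w : ℂ) / ‖(ζ : ℂ) - (starRingEnd ℂ) (w : ℂ)‖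
      ≤ (w.im * Real.exp δ * d) / w.im := by
    exact div_le_div₀ (by positivity) hnumbd hwim hden
  have hfin : (w.im * Real.exp δ * d) / w.im = Real.exp δ * d := by
    field_simp
  rw [hfin] at hdiv
  exact hdiv
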